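/- The carrier games u_π, indexed by nonempty injective sequences π of a finite player set N, where u_π(π') = 1 if π is a proper prefix of π' or π = π', and 0 otherwise, are linearly independent as vectors in ℝ^Π and span ℝ^Π; hence every worth function v : Π → ℝ is a unique linear combination of the u_π. -/

import Mathlib

noncomputable section

/-- The set Π of nonempty injective sequences over `Fin n`. -/
def PiSeq (n : ℕ) := {l : List (Fin n) // l ≠ [] ∧ l.Nodup}

/-- The carrier game over a sequence π: worth 1 on sequences having π as a prefix, 0 otherwise. -/
def carrier {n : ℕ} (π : PiSeq n) : PiSeq n → ℝ :=
  fun π' => if π.1 <+: π'.1 then 1 else 0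

instance PiSeq.fintype (n : ℕ) : Fintype (PiSeq n) := by
  apply Fintype.ofInjective (fun l : PiSeq n => fun i : Fin n => l.1[(i : ℕ)]?)
  rintro ⟨l, _, hl⟩ ⟨m, _, hm⟩ h
  have hln : l.length ≤ n := by simpa using hl.length_le_card
  have hmn : m.length ≤ n := by simpa using hm.length_le_card
  apply Subtype.ext
  apply List.ext_getElem?
  intro i
  by_cases hi : i < n
  · exact congrFun h ⟨i, hi⟩
  · rw [List.getElem?_eq_none_iff.2 (le_trans hln (le_of_not_gt hi)),
      List.getElem?_eq_none_iff.2 (le_trans hmn (le_of_not_gt hi))]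

lemma carrier_indep_aux {n : ℕ} (g : PiSeq n → ℝ)
    (hg : ∑ π, g π • carrier (n := n) π = 0) : ∀ π, g π = 0 := by
  intro π
  obtain ⟨k, hlen⟩ : ∃ k, π.1.length = k := ⟨_, rfl⟩
  induction k using Nat.strong_induction_on generalizing π with
  | _ k ih =>
  have h0 := congrFun hg π
  simp only [Finset.sum_apply, Pi.smul_apply, Pi.zero_apply, carrier, smul_eq_mul,
    mul_ite, mul_one, mul_zero] at h0
  rw [← Finset.sum_filter] at h0
  have : ∀ σ ∈ Finset.univ.filter (fun σ : PiSeq n => σ.1 <+: π.1), σ ≠ π → g σ = 0 := by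
    intro σ hσ hne
    rw [Finset.mem_filter] at hσ
    have hpre := hσ.2
    have hlt : σ.1.length < π.1.length := by
      rcases lt_or_eq_of_le hpre.length_le with h | h
      · exact h
      · exact absurd (Subtype.ext (List.IsPrefix.eq_of_length hpre h)) hne
    exact ih _ (hlen ▸ hlt) σ rfl
  rw [Finset.sum_eq_single_of_mem π (by simp [List.prefix_refl]) this] at h0
  exact h0

/-- the carrier games are linearly independent and span ℝ^Π; hence every
    worth function is a (unique) linear combination of carrier games. -/
theorem stmt7 {n : ℕ} :
    LinearIndependent ℝ (carrier (n := n)) ∧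
      Submodule.span ℝ (Set.range (carrier (n := n))) = ⊤ := by
  have hind : LinearIndependent ℝ (carrier (n := n)) := by
    rw [Fintype.linearIndependent_iff]
    intro g hg
    exact carrier_indep_aux g (by simpa using hg)
  refine ⟨hind, hind.span_eq_top_of_card_eq_finrank' ?_⟩
  rw [Module.finrank_fintype_fun_eq_card]
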